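/- Let L be the generator of an irreducible continuous-time Markov chain on a finite state space Ω reversible with respect to π, and let c_LS be its log-Sobolev constant: c_LS = inf{E(h,h)/Ent_π(h²)} over nonconstant h ≥ 0, where Ent_π(f) = E_π[f log(f/E_π f)]. Then c_LS ≤ min_x (−L(x,x))/log(1/π(x)). -/
import Mathlib


noncomputable section

variable {Ω : Type*} [Fintype Ω] [DecidableEq Ω]

/-- Dirichlet form of a generator `L`: `E(h,h) = (1/2) Σ_{x,y} π(x) L(x,y) (h(x) − h(y))²`. -/
def dirFormL (π : Ω → ℝ) (L : Matrix Ω Ω ℝ) (h : Ω → ℝ) : ℝ :=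
  (1 / 2) * ∑ x, ∑ y, π x * L x y * (h x - h y) ^ 2

/-- Entropy `Ent_π(f) = E_π[f log(f/E_π f)]` (with the convention `0·log 0 = 0`, which holds
automatically since `Real.log 0 = 0`). -/
def entPi (π : Ω → ℝ) (f : Ω → ℝ) : ℝ :=
  ∑ x, π x * f x * Real.log (f x / ∑ y, π y * f y)

/-- The log-Sobolev constant `c_LS = inf{E(h,h)/Ent_π(h²) : h² nonconstant}`. -/
def cLS (π : Ω → ℝ) (L : Matrix Ω Ω ℝ) : ℝ :=
  sInf {r : ℝ | ∃ h : Ω → ℝ, (¬ ∀ x y, h x ^ 2 = h y ^ 2) ∧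
    r = dirFormL π L h / entPi π (fun x => h x ^ 2)}

-- entropy nonneg for nonneg f
lemma entPi_nonneg (π : Ω → ℝ) (hπpos : ∀ x, 0 < π x) (hπsum : ∑ x, π x = 1)
    (f : Ω → ℝ) (hf : ∀ x, 0 ≤ f x) : 0 ≤ entPi π f := by
  set m : ℝ := ∑ y, π y * f y with hm
  have hm0 : 0 ≤ m := Finset.sum_nonneg fun y _ =>
    mul_nonneg (hπpos y).le (hf y)
  rcases eq_or_lt_of_le hm0 with hme | hmpos
  · -- m = 0 → all f = 0
    have hall : ∀ x, f x = 0 := by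
      intro x
      have := (Finset.sum_eq_zero_iff_of_nonneg (fun y _ =>
        mul_nonneg (hπpos y).le (hf y))).mp hme.symm x (Finset.mem_univ x)
      have hx := hπpos x
      nlinarith [hf x]
    unfold entPi
    rw [← hm]
    apply le_of_eq
    symm
    apply Finset.sum_eq_zero
    intro x _
    simp [hall x]
  · have key : ∀ x, π x * (f x - m) ≤ π x * f x * Real.log (f x / m) := by
      intro x
      rcases eq_or_lt_of_le (hf x) with h0 | hpos
      · rw [← h0]
        simp
        nlinarith [(hπpos x).le, hm0]
      · have h1 : Real.log (m / f x) ≤ m / f x - 1 :=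
          Real.log_le_sub_one_of_pos (by positivity)
        have h2 : Real.log (m / f x) = - Real.log (f x / m) := by
          rw [Real.log_div (ne_of_gt hmpos) (ne_of_gt hpos),
            Real.log_div (ne_of_gt hpos) (ne_of_gt hmpos)]
          ring
        have h3 : 1 - m / f x ≤ Real.log (f x / m) := by linarith
        have h4 : f x - m ≤ f x * Real.log (f x / m) := by
          have := mul_le_mul_of_nonneg_left h3 hpos.le
          have hfx : f x * (1 - m / f x) = f x - m := by
            field_simp
          linarith [hfx ▸ this]
        calc π x * (f x - m) ≤ π x * (f x * Real.log (f x / m)) :=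
              mul_le_mul_of_nonneg_left h4 (hπpos x).le
          _ = π x * f x * Real.log (f x / m) := by ring
    have : ∑ x, π x * (f x - m) ≤ entPi π f := by
      unfold entPi; rw [← hm]
      exact Finset.sum_le_sum fun x _ => key x
    have heq : ∑ x, π x * (f x - m) = 0 := by
      simp only [mul_sub]
      rw [Finset.sum_sub_distrib, ← Finset.sum_mul, hπsum, hm]
      ring
    linarith

/-- equation (7.2). For an irreducible generator `L` reversible w.r.t. `π`
on a finite state space with at least two points,
`c_LS ≤ min_x (−L(x,x)) / log(1/π(x))`. -/
theorem stmt10 (hcard : 1 < Fintype.card Ω)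
    (π : Ω → ℝ) (hπpos : ∀ x, 0 < π x) (hπsum : ∑ x, π x = 1)
    (L : Matrix Ω Ω ℝ)
    (hLoff : ∀ x y, x ≠ y → 0 ≤ L x y) (hLrow : ∀ x, ∑ y, L x y = 0)
    (hrev : ∀ x y, π x * L x y = π y * L y x)
    (hirr : ∀ x y : Ω, ∃ n : ℕ,
      0 < ((Matrix.of fun x y => if x = y then 0 else L x y) ^ n) x y) :
    ∀ x : Ω, cLS π L ≤ (-(L x x)) / Real.log (1 / π x) := by
  intro x
  -- bddBelow by 0
  have hbdd : BddBelow {r : ℝ | ∃ h : Ω → ℝ, (¬ ∀ x y, h x ^ 2 = h y ^ 2) ∧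
      r = dirFormL π L h / entPi π (fun x => h x ^ 2)} := by
    refine ⟨0, ?_⟩
    rintro r ⟨h, _, rfl⟩
    have hE : 0 ≤ dirFormL π L h := by
      unfold dirFormL
      apply mul_nonneg (by norm_num)
      apply Finset.sum_nonneg; intro a _
      apply Finset.sum_nonneg; intro b _
      rcases eq_or_ne a b with rfl | hab
      · simp
      · exact mul_nonneg (mul_nonneg (hπpos a).le (hLoff a b hab)) (sq_nonneg _)
    have hEnt : 0 ≤ entPi π (fun x => h x ^ 2) :=
      entPi_nonneg π hπpos hπsum _ (fun x => sq_nonneg _)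
    positivity
  -- the test function
  set h : Ω → ℝ := fun a => if a = x then 1 else 0 with hh
  obtain ⟨y, hyx⟩ := Fintype.exists_ne_of_one_lt_card hcard x
  have hne : ¬ ∀ a b, h a ^ 2 = h b ^ 2 := by
    intro hc
    have := hc x y
    simp [hh, hyx] at this
  -- entropy value
  have hsum : (∑ a, π a * (h a)^2) = π x := by
    rw [Finset.sum_eq_single x]
    · simp [hh]
    · intro b _ hb; simp [hh, hb]
    · intro hx; exact absurd (Finset.mem_univ x) hx
  have hEnt : entPi π (fun a => h a ^ 2) = π x * Real.log (1 / π x) := by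
    unfold entPi
    rw [Finset.sum_eq_single x]
    · simp only [hh, if_pos rfl, one_pow, mul_one]
      congr 2
      rw [show (∑ b, π b * (if b = x then (1:ℝ) else 0) ^ 2) = π x from hsum]
    · intro b _ hb; simp [hh, hb]
    · intro hx; exact absurd (Finset.mem_univ x) hx
  -- dirichlet value
  have hDir : dirFormL π L h = π x * (- L x x) := by
    unfold dirFormL
    have inner : ∀ a : Ω, (∑ b, π a * L a b * (h a - h b) ^ 2) =
        if a = x then -(π x * L x x) else π x * L x a := by
      intro a
      rcases eq_or_ne a x with rfl | ha
      · rw [if_pos rfl]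
        have : ∀ b : Ω, π a * L a b * (h a - h b) ^ 2 =
            π a * L a b - (if b = a then π a * L a b else 0) := by
          intro b
          rcases eq_or_ne b a with rfl | hb
          · simp [hh]
          · simp [hh, hb]
        simp only [this]
        rw [Finset.sum_sub_distrib, Finset.sum_ite_eq' Finset.univ a,
          ← Finset.mul_sum, hLrow a]
        simp
      · rw [if_neg ha]
        have : ∀ b : Ω, π a * L a b * (h a - h b) ^ 2 =
            (if b = x then π x * L x a else 0) := by
          intro b
          rcases eq_or_ne b x with rfl | hb
          · rw [if_pos rfl]
            simp only [hh, if_neg ha, if_pos rfl]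
            rw [hrev a b]
            ring
          · simp [hh, ha, hb]
        simp only [this]
        rw [Finset.sum_ite_eq' Finset.univ x]
        simp
    simp only [inner]
    rw [← Finset.add_sum_erase Finset.univ _ (Finset.mem_univ x), if_pos rfl]
    have h2 : (∑ a ∈ Finset.univ.erase x,
        if a = x then -(π x * L x x) else π x * L x a)
        = ∑ a ∈ Finset.univ.erase x, π x * L x a := by
      apply Finset.sum_congr rfl
      intro a ha
      rw [if_neg (Finset.ne_of_mem_erase ha)]
    rw [h2, Finset.sum_erase_eq_sub (Finset.mem_univ x), ← Finset.mul_sum,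
      hLrow x]
    ring
  -- conclude
  apply csInf_le hbdd
  refine ⟨h, hne, ?_⟩
  rw [hDir, hEnt, mul_div_mul_left _ _ (hπpos x).ne']

end
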